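/- For every positive integer L, the identity Σ_{s=1}^{L} q^{2s+1}/(q^s;q)_{L+2−s} = 1 − q/(1−q^{L+1}) + (2q−1)/(q;q)_{L+1} holds as formal power series in q. -/

import Mathlib

open PowerSeries

/-- `(q^s; q)_n` as a formal power series in `q = X` over `ℚ`. -/
noncomputable def qp (s n : ℕ) : PowerSeries ℚ :=
  ∏ i ∈ Finset.range n, (1 - (X : PowerSeries ℚ) ^ (s + i))

lemma qp_const (s n : ℕ) (hs : 1 ≤ s) : constantCoeff (qp s n) = 1 := by
  unfold qp
  rw [map_prod]
  refine Finset.prod_eq_one fun i _ => ?_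
  have h : (s + i) ≠ 0 := by omega
  simp [h]; omega

lemma qp_mul_inv (s n : ℕ) (hs : 1 ≤ s) : qp s n * (qp s n)⁻¹ = 1 :=
  PowerSeries.mul_inv_cancel _ (by rw [qp_const s n hs]; norm_num)

lemma qp_inv_mul (s n : ℕ) (hs : 1 ≤ s) : (qp s n)⁻¹ * qp s n = 1 := by
  rw [mul_comm]; exact qp_mul_inv s n hs

lemma qp_succ (s n : ℕ) : qp s (n + 1) = (1 - (X : PowerSeries ℚ) ^ s) * qp (s + 1) n := by
  unfold qp
  rw [Finset.prod_range_succ', mul_comm]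
  congr 1
  exact Finset.prod_congr rfl fun i _ => by rw [show s + (i + 1) = s + 1 + i from by omega]

lemma eq_mul_inv (a b c : PowerSeries ℚ) (hc : constantCoeff c ≠ 0) (h : a * c = b) :
    a = b * c⁻¹ := by
  rw [← h, mul_assoc, PowerSeries.mul_inv_cancel _ hc, mul_one]

/-- **Theorem 4.3.** For `L ≥ 1`,
`Σ_{s=1}^{L} q^{2s+1}/(q^s;q)_{L+2-s} = 1 - q/(1-q^{L+1}) + (2q-1)/(q;q)_{L+1}`. -/
theorem stmt4 (L : ℕ) (hL : 1 ≤ L) :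
    ∑ s ∈ Finset.Icc 1 L, (X : PowerSeries ℚ) ^ (2 * s + 1) * (qp s (L + 2 - s))⁻¹
      = 1 - (X : PowerSeries ℚ) * (1 - (X : PowerSeries ℚ) ^ (L + 1))⁻¹
        + (2 * (X : PowerSeries ℚ) - 1) * (qp 1 (L + 1))⁻¹ := by
  set A : ℕ → PowerSeries ℚ :=
    fun s => ((X : PowerSeries ℚ) ^ s + X - 1) * (qp s (L + 2 - s))⁻¹ with hA
  have step : ∀ s : ℕ, 1 ≤ s → s ≤ L →
      (X : PowerSeries ℚ) ^ (2 * s + 1) * (qp s (L + 2 - s))⁻¹ = A s - A (s + 1) := by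
    intro s h1 h2
    have hDE : qp s (L + 2 - s) = (1 - (X : PowerSeries ℚ) ^ s) * qp (s + 1) (L + 2 - (s + 1)) := by
      rw [show L + 2 - s = (L + 2 - (s + 1)) + 1 from by omega, qp_succ]
    have hc : constantCoeff (qp s (L + 2 - s)) ≠ 0 := by
      rw [qp_const s _ h1]; norm_num
    have hD : (qp s (L + 2 - s))⁻¹ * qp s (L + 2 - s) = 1 := qp_inv_mul _ _ h1
    have hE : (qp (s + 1) (L + 2 - (s + 1)))⁻¹ * qp (s + 1) (L + 2 - (s + 1)) = 1 :=
      qp_inv_mul _ _ (by omega)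
    symm
    refine eq_mul_inv _ _ _ hc ?_
    calc (A s - A (s + 1)) * qp s (L + 2 - s)
        = ((X : PowerSeries ℚ) ^ s + X - 1) * ((qp s (L + 2 - s))⁻¹ * qp s (L + 2 - s))
          - ((X : PowerSeries ℚ) ^ (s + 1) + X - 1) * (qp (s + 1) (L + 2 - (s + 1)))⁻¹
            * qp s (L + 2 - s) := by rw [hA]; ring
      _ = ((X : PowerSeries ℚ) ^ s + X - 1)
          - ((X : PowerSeries ℚ) ^ (s + 1) + X - 1) * (1 - (X : PowerSeries ℚ) ^ s)
            * ((qp (s + 1) (L + 2 - (s + 1)))⁻¹ * qp (s + 1) (L + 2 - (s + 1))) := by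
            rw [hD, hDE]; ring
      _ = (X : PowerSeries ℚ) ^ (2 * s + 1) := by rw [hE]; ring
  have hIcc : Finset.Icc 1 L = Finset.Ico 1 (L + 1) := by
    rw [Finset.Ico_add_one_right_eq_Icc]
  rw [hIcc, Finset.sum_Ico_eq_sum_range]
  have hsum : ∑ i ∈ Finset.range (L + 1 - 1),
      (X : PowerSeries ℚ) ^ (2 * (1 + i) + 1) * (qp (1 + i) (L + 2 - (1 + i)))⁻¹
      = ∑ i ∈ Finset.range L, ((fun j => A (j + 1)) i - (fun j => A (j + 1)) (i + 1)) := by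
    rw [show L + 1 - 1 = L from by omega]
    refine Finset.sum_congr rfl fun i hi => ?_
    have hi' : i < L := Finset.mem_range.mp hi
    rw [show 1 + i = i + 1 from by omega]
    exact step (i + 1) (by omega) (by omega)
  rw [hsum, Finset.sum_range_sub' (fun j => A (j + 1))]
  -- Now: A 1 - A (L + 1) = RHS
  have hA1 : A (0 + 1) = (2 * (X : PowerSeries ℚ) - 1) * (qp 1 (L + 1))⁻¹ := by
    simp only [hA]
    rw [show L + 2 - 1 = L + 1 from by omega]
    ring
  have hqpL : qp (L + 1) (L + 2 - (L + 1)) = 1 - (X : PowerSeries ℚ) ^ (L + 1) := by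
    rw [show L + 2 - (L + 1) = 1 from by omega]
    unfold qp
    simp
  have hG : (1 - (X : PowerSeries ℚ) ^ (L + 1)) * (1 - (X : PowerSeries ℚ) ^ (L + 1))⁻¹ = 1 := by
    rw [← hqpL]; exact qp_mul_inv _ _ (by omega)
  have hAL : A (L + 1) = ((X : PowerSeries ℚ) ^ (L + 1) + X - 1)
      * (1 - (X : PowerSeries ℚ) ^ (L + 1))⁻¹ := by
    simp only [hA]; rw [hqpL]
  rw [hA1, hAL]
  have : ((X : PowerSeries ℚ) ^ (L + 1) + X - 1) * (1 - (X : PowerSeries ℚ) ^ (L + 1))⁻¹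
      = (X : PowerSeries ℚ) * (1 - (X : PowerSeries ℚ) ^ (L + 1))⁻¹ - 1 := by
    have := hG
    calc ((X : PowerSeries ℚ) ^ (L + 1) + X - 1) * (1 - (X : PowerSeries ℚ) ^ (L + 1))⁻¹
        = (X : PowerSeries ℚ) * (1 - (X : PowerSeries ℚ) ^ (L + 1))⁻¹
          - (1 - (X : PowerSeries ℚ) ^ (L + 1)) * (1 - (X : PowerSeries ℚ) ^ (L + 1))⁻¹ := by ring
      _ = (X : PowerSeries ℚ) * (1 - (X : PowerSeries ℚ) ^ (L + 1))⁻¹ - 1 := by rw [hG]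
  rw [this]
  ring
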